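/- With P_max defined as the chain-infimum of δ̂, P_max is positive definite: P_max(ρ,σ) = 0 if and only if ρ = σ. -/

import Mathlib

open Matrix BigOperators ComplexOrder

variable {n : Type*} [Fintype n] [DecidableEq n]

/-- Trace norm (Schatten 1-norm) of a matrix. -/
noncomputable def traceNorm (A : Matrix n n ℂ) : ℝ :=
  (((Matrix.posSemidef_conjTranspose_mul_self A).1.eigenvectorUnitary : Matrix n n ℂ) *
    diagonal (((↑) : ℝ → ℂ) ∘ (√·) ∘ (Matrix.posSemidef_conjTranspose_mul_self A).1.eigenvalues) *
    (star (Matrix.posSemidef_conjTranspose_mul_self A).1.eigenvectorUnitary : Matrix n n ℂ)).trace.re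

/-- A density operator: positive semidefinite with trace 1. -/
def IsDensity (ρ : Matrix n n ℂ) : Prop := ρ.PosSemidef ∧ ρ.trace = 1

/-- δ̃(ρ,σ): smallest mixing weight ε with ρ = (1-ε)σ + εσ'. -/
noncomputable def deltaTilde (ρ σ : Matrix n n ℂ) : ℝ :=
  sInf {ε : ℝ | ε ∈ Set.Icc (0:ℝ) 1 ∧
    ∃ σ' : Matrix n n ℂ, IsDensity σ' ∧ ρ = (1 - ε) • σ + ε • σ'}

/-- δ̂ = min of δ̃ in both orders. -/
noncomputable def deltaHat (ρ σ : Matrix n n ℂ) : ℝ :=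
  min (deltaTilde ρ σ) (deltaTilde σ ρ)

/-- P_max: infimum over finite chains of density operators from ρ to σ of the
sum of δ̂ over consecutive pairs. -/
noncomputable def Pmax (ρ σ : Matrix n n ℂ) : ℝ :=
  sInf {s : ℝ | ∃ (m : ℕ) (ω : Fin (m + 1) → Matrix n n ℂ),
    ω 0 = ρ ∧ ω (Fin.last m) = σ ∧ (∀ i, IsDensity (ω i)) ∧
    s = ∑ i : Fin m, deltaHat (ω i.castSucc) (ω i.succ)}

/-! ### Auxiliary: entrywise L¹ norm -/

noncomputable def matAbsSum (A : Matrix n n ℂ) : ℝ := ∑ i, ∑ j, ‖A i j‖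

lemma matAbsSum_nonneg (A : Matrix n n ℂ) : 0 ≤ matAbsSum A := by
  unfold matAbsSum; positivity

lemma matAbsSum_eq_zero {A : Matrix n n ℂ} (h : matAbsSum A = 0) : A = 0 := by
  ext i j
  have h1 : ∀ i ∈ Finset.univ, (0:ℝ) ≤ ∑ j, ‖A i j‖ := by
    intro i _; positivity
  have h2 := (Finset.sum_eq_zero_iff_of_nonneg h1).mp h i (Finset.mem_univ i)
  have h3 : ∀ j ∈ Finset.univ, (0:ℝ) ≤ ‖A i j‖ := by
    intro j _; positivity
  have h4 := (Finset.sum_eq_zero_iff_of_nonneg h3).mp h2 j (Finset.mem_univ j)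
  simpa using h4

lemma matAbsSum_add_le (A B : Matrix n n ℂ) :
    matAbsSum (A + B) ≤ matAbsSum A + matAbsSum B := by
  unfold matAbsSum
  rw [← Finset.sum_add_distrib]
  refine Finset.sum_le_sum fun i _ => ?_
  rw [← Finset.sum_add_distrib]
  exact Finset.sum_le_sum fun j _ => norm_add_le _ _

lemma matAbsSum_neg (A : Matrix n n ℂ) : matAbsSum (-A) = matAbsSum A := by
  unfold matAbsSum; simp

lemma matAbsSum_sub_comm (A B : Matrix n n ℂ) :
    matAbsSum (A - B) = matAbsSum (B - A) := by
  rw [← matAbsSum_neg (A - B), neg_sub]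

lemma matAbsSum_sub_le (A B C : Matrix n n ℂ) :
    matAbsSum (A - C) ≤ matAbsSum (A - B) + matAbsSum (B - C) := by
  have : A - C = (A - B) + (B - C) := by abel
  rw [this]; exact matAbsSum_add_le _ _

lemma matAbsSum_smul (ε : ℝ) (A : Matrix n n ℂ) :
    matAbsSum (ε • A) = |ε| * matAbsSum A := by
  unfold matAbsSum
  simp only [Finset.mul_sum]
  refine Finset.sum_congr rfl fun i _ => Finset.sum_congr rfl fun j _ => ?_
  have : (ε • A) i j = (ε : ℂ) * A i j := by
    simp [Matrix.smul_apply, Complex.real_smul]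
  rw [this, norm_mul, Complex.norm_real, Real.norm_eq_abs]

/-! ### Entry bounds for PSD matrices -/

lemma star_single (i : n) (a : ℂ) :
    star (Pi.single i a : n → ℂ) = Pi.single i (star a) := by
  funext k
  rcases eq_or_ne k i with h | h
  · subst h; simp
  · simp [Pi.single_apply, h]

lemma psd_diag {A : Matrix n n ℂ} (hA : A.PosSemidef) (i : n) :
    0 ≤ (A i i).re ∧ (A i i).im = 0 := by
  have h := hA.dotProduct_mulVec_nonneg (Pi.single i 1)
  have hv : star (Pi.single i (1:ℂ)) ⬝ᵥ (A *ᵥ Pi.single i 1) = A i i := by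
    rw [star_single, Matrix.mulVec_single, single_dotProduct]
    simp
  rw [hv] at h
  rw [Complex.le_def] at h
  simp only [Complex.zero_re, Complex.zero_im] at h
  exact ⟨h.1, h.2.symm⟩

lemma psd_entry_bound {A : Matrix n n ℂ} (hA : A.PosSemidef) (i j : n) :
    ‖A i j‖ ≤ ((A i i).re + (A j j).re) / 2 := by
  rcases eq_or_ne i j with rfl | hij
  · obtain ⟨h1, h2⟩ := psd_diag hA i
    have : ‖A i i‖ = (A i i).re := by
      rw [Complex.norm_def, Complex.normSq_apply, h2]
      rw [mul_zero, add_zero, Real.sqrt_mul_self h1]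
    rw [this]; linarith
  rcases eq_or_ne (A i j) 0 with h0 | h0
  · rw [h0]
    have h1 := (psd_diag hA i).1
    have h2 := (psd_diag hA j).1
    simp only [norm_zero]
    linarith
  · set a := A i j with ha
    set r : ℝ := ‖a‖ with hr
    have hrpos : 0 < r := norm_pos_iff.mpr h0
    have hrC : (r : ℂ) ≠ 0 := by exact_mod_cast hrpos.ne'
    set c : ℂ := -(starRingEnd ℂ a) / r with hc
    have hmc : a * (starRingEnd ℂ a) = (r : ℂ) ^ 2 := by
      rw [Complex.mul_conj]
      norm_cast
      exact (Complex.sq_norm a).symm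
    have hc1 : a * c = -(r : ℂ) := by
      rw [hc]
      field_simp
      rw [hmc]
    have hc2 : (starRingEnd ℂ c) * (starRingEnd ℂ a) = -(r : ℂ) := by
      rw [hc]
      simp only [map_div₀, map_neg, Complex.conj_conj, Complex.conj_ofReal]
      field_simp
      linear_combination (-1) * hmc
    have hc3 : (starRingEnd ℂ c) * c = 1 := by
      rw [hc]
      simp only [map_div₀, map_neg, Complex.conj_conj, Complex.conj_ofReal]
      field_simp
      linear_combination hmc
    set x : n → ℂ := Pi.single i 1 + Pi.single j c with hx
    have hq := hA.dotProduct_mulVec_nonneg x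
    have hji : A j i = starRingEnd ℂ a := by
      rw [ha, ← hA.1.apply i j]
      simp [Complex.star_def]
    have hexp : star x ⬝ᵥ (A *ᵥ x) = A i i + A i j * c
        + (starRingEnd ℂ c) * A j i + (starRingEnd ℂ c) * (A j j * c) := by
      rw [hx, star_add, star_single, star_single]
      simp only [Matrix.mulVec_add, Matrix.mulVec_single, add_dotProduct,
        dotProduct_add, single_dotProduct, Pi.add_apply, star_one,
        Pi.smul_apply, op_smul_eq_mul, Matrix.col_apply,
        Complex.star_def]
      ring
    have hxval : star x ⬝ᵥ (A *ᵥ x) = A i i + A j j - 2 * (r : ℂ) := by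
      rw [hexp, hji, ← ha]
      linear_combination hc1 + hc2 + A j j * hc3
    rw [hxval, Complex.le_def] at hq
    have hre : (0:ℝ) ≤ (A i i).re + (A j j).re - 2 * r := by
      have := hq.1
      simpa [Complex.sub_re, Complex.add_re, Complex.mul_re] using this
    linarith

lemma matAbsSum_density_le {A : Matrix n n ℂ} (hA : IsDensity A) :
    matAbsSum A ≤ (Fintype.card n : ℝ) := by
  have hT : ∑ i, (A i i).re = 1 := by
    have h := hA.2
    have : (A.trace).re = 1 := by rw [h]; simp
    rw [Matrix.trace] at this
    rw [← this]
    simp [Matrix.diag, Complex.re_sum]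
  have h1 : matAbsSum A ≤ ∑ i : n, ∑ j : n, ((A i i).re + (A j j).re) / 2 := by
    unfold matAbsSum
    exact Finset.sum_le_sum fun i _ => Finset.sum_le_sum fun j _ =>
      psd_entry_bound hA.1 i j
  refine h1.trans_eq ?_
  have : ∀ i : n, ∑ j : n, ((A i i).re + (A j j).re) / 2
      = ((Fintype.card n : ℝ) * (A i i).re + 1) / 2 := by
    intro i
    rw [← Finset.sum_div, Finset.sum_add_distrib, Finset.sum_const, hT,
      Finset.card_univ, nsmul_eq_mul]
  rw [Finset.sum_congr rfl fun i _ => this i, ← Finset.sum_div,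
    Finset.sum_add_distrib, ← Finset.mul_sum, hT, Finset.sum_const,
    Finset.card_univ, nsmul_eq_mul]
  ring

/-! ### Lower bounds on δ̃, δ̂, P_max -/

lemma deltaTilde_nonneg (ρ σ : Matrix n n ℂ) : 0 ≤ deltaTilde ρ σ := by
  apply Real.sInf_nonneg
  rintro x ⟨⟨h0, _⟩, _⟩
  exact h0

lemma deltaHat_nonneg (ρ σ : Matrix n n ℂ) : 0 ≤ deltaHat ρ σ :=
  le_min (deltaTilde_nonneg ρ σ) (deltaTilde_nonneg σ ρ)

lemma matAbsSum_le_deltaTilde {ρ σ : Matrix n n ℂ}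
    (hρ : IsDensity ρ) (hσ : IsDensity σ) :
    matAbsSum (ρ - σ) ≤ 2 * (Fintype.card n : ℝ) * deltaTilde ρ σ := by
  have hne : Nonempty n := by
    by_contra h
    rw [not_nonempty_iff] at h
    have := hρ.2
    simp [Matrix.trace] at this
  have hK : (0:ℝ) < (Fintype.card n : ℝ) := by
    exact_mod_cast Fintype.card_pos
  set K : ℝ := (Fintype.card n : ℝ) with hKdef
  have hSne : {ε : ℝ | ε ∈ Set.Icc (0:ℝ) 1 ∧
      ∃ σ' : Matrix n n ℂ, IsDensity σ' ∧ ρ = (1 - ε) • σ + ε • σ'}.Nonempty := by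
    exact ⟨1, ⟨by norm_num, by norm_num⟩, ρ, hρ, by simp⟩
  have hlb : ∀ ε ∈ {ε : ℝ | ε ∈ Set.Icc (0:ℝ) 1 ∧
      ∃ σ' : Matrix n n ℂ, IsDensity σ' ∧ ρ = (1 - ε) • σ + ε • σ'},
      matAbsSum (ρ - σ) / (2 * K) ≤ ε := by
    rintro ε ⟨⟨hε0, _⟩, σ', hσ', heq⟩
    rw [div_le_iff₀ (by positivity)]
    have hsub : ρ - σ = ε • (σ' - σ) := by
      rw [heq]; ext i j; simp [Matrix.smul_apply, Matrix.sub_apply]; ring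
    rw [hsub, matAbsSum_smul, abs_of_nonneg hε0]
    have h1 : matAbsSum (σ' - σ) ≤ 2 * K := by
      have := matAbsSum_sub_le σ' 0 σ
      simp only [sub_zero, zero_sub, matAbsSum_neg] at this
      have b1 := matAbsSum_density_le hσ'
      have b2 := matAbsSum_density_le hσ
      rw [← hKdef] at b1 b2
      linarith
    calc ε * matAbsSum (σ' - σ) ≤ ε * (2 * K) :=
          mul_le_mul_of_nonneg_left h1 hε0
      _ = ε * (2 * K) := rfl
  have := le_csInf hSne hlb
  rw [div_le_iff₀ (by positivity)] at this
  unfold deltaTilde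
  linarith [this]

lemma matAbsSum_le_deltaHat {ρ σ : Matrix n n ℂ}
    (hρ : IsDensity ρ) (hσ : IsDensity σ) :
    matAbsSum (ρ - σ) ≤ 2 * (Fintype.card n : ℝ) * deltaHat ρ σ := by
  rcases min_cases (deltaTilde ρ σ) (deltaTilde σ ρ) with ⟨h, _⟩ | ⟨h, _⟩
  · rw [deltaHat, h]; exact matAbsSum_le_deltaTilde hρ hσ
  · rw [deltaHat, h, matAbsSum_sub_comm]
    exact matAbsSum_le_deltaTilde hσ hρ

lemma matAbsSum_telescope : ∀ (m : ℕ) (ω : Fin (m+1) → Matrix n n ℂ),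
    matAbsSum (ω 0 - ω (Fin.last m)) ≤
      ∑ i : Fin m, matAbsSum (ω i.castSucc - ω i.succ) := by
  intro m
  induction m with
  | zero =>
    intro ω
    simp [Fin.last, matAbsSum]
  | succ m ih =>
    intro ω
    rw [Fin.sum_univ_castSucc]
    have h1 := ih (ω ∘ Fin.castSucc)
    simp only [Function.comp_apply] at h1
    have h2 : matAbsSum (ω 0 - ω (Fin.last (m+1))) ≤
        matAbsSum (ω 0 - ω ((Fin.last m).castSucc)) +
        matAbsSum (ω ((Fin.last m).castSucc) - ω ((Fin.last m).succ)) := by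
      rw [Fin.succ_last]
      exact matAbsSum_sub_le _ _ _
    refine h2.trans ?_
    have h3 : matAbsSum (ω 0 - ω ((Fin.last m).castSucc)) ≤
        ∑ i : Fin m, matAbsSum (ω (i.castSucc.castSucc) - ω (i.castSucc.succ)) := by
      simpa only [Fin.castSucc_zero, ← Fin.succ_castSucc] using h1
    linarith
  
theorem Pmax_pos_def (ρ σ : Matrix n n ℂ)
    (hρ : IsDensity ρ) (hσ : IsDensity σ) :
    Pmax ρ σ = 0 ↔ ρ = σ := by
  constructor
  · intro h0
    have hne : Nonempty n := by
      by_contra h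
      rw [not_nonempty_iff] at h
      have := hρ.2
      simp [Matrix.trace] at this
    have hK : (0:ℝ) < (Fintype.card n : ℝ) := by exact_mod_cast Fintype.card_pos
    set K : ℝ := (Fintype.card n : ℝ) with hKdef
    set S := {s : ℝ | ∃ (m : ℕ) (ω : Fin (m + 1) → Matrix n n ℂ),
      ω 0 = ρ ∧ ω (Fin.last m) = σ ∧ (∀ i, IsDensity (ω i)) ∧
      s = ∑ i : Fin m, deltaHat (ω i.castSucc) (ω i.succ)} with hS
    have hSne : S.Nonempty := by
      refine ⟨deltaHat ρ σ, 1, ![ρ, σ], rfl, rfl, ?_, ?_⟩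
      · intro i; fin_cases i <;> simpa
      · simp
    have hlb : ∀ s ∈ S, matAbsSum (ρ - σ) / (2 * K) ≤ s := by
      rintro s ⟨m, ω, h0', hlast, hdens, hsum⟩
      rw [div_le_iff₀ (by positivity)]
      have htel := matAbsSum_telescope m ω
      rw [h0', hlast] at htel
      have hsum2 : ∑ i : Fin m, matAbsSum (ω i.castSucc - ω i.succ) ≤
          ∑ i : Fin m, 2 * K * deltaHat (ω i.castSucc) (ω i.succ) := by
        refine Finset.sum_le_sum fun i _ => ?_
        exact matAbsSum_le_deltaHat (hdens _) (hdens _)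
      rw [← Finset.mul_sum] at hsum2
      rw [hsum]
      linarith
    have hle := le_csInf hSne hlb
    have : Pmax ρ σ = sInf S := rfl
    rw [← this, h0] at hle
    rw [div_le_iff₀ (by positivity)] at hle
    have hge := matAbsSum_nonneg (ρ - σ)
    have : matAbsSum (ρ - σ) = 0 := by linarith
    have := matAbsSum_eq_zero this
    rwa [sub_eq_zero] at this
  · rintro rfl
    apply le_antisymm
    · apply csInf_le
      · refine ⟨0, ?_⟩
        rintro s ⟨m, ω, _, _, _, hsum⟩
        rw [hsum]
        exact Finset.sum_nonneg fun i _ => deltaHat_nonneg _ _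
      · exact ⟨0, fun _ => ρ, rfl, rfl, fun _ => hρ, by simp⟩
    · apply Real.sInf_nonneg
      rintro s ⟨m, ω, _, _, _, hsum⟩
      rw [hsum]
      exact Finset.sum_nonneg fun i _ => deltaHat_nonneg _ _
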